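/- arXiv:2306.14718 — 5 statements merged into one kernel-verified Lean document; each statement's English description precedes it below -/
import Mathlib

section
/- Let α, β, γ, δ > 0. Define F(q) = h(α − αq) + h(β + αq) + h(γ + αq) + h(δ + βq) + h(δ + γq) − h(δ + αq + βq + γq), where h(x) = −x log x. Then F(0) = h(α) + h(β) + h(γ) + h(δ) and F'(0) = α·log(αδ/(βγ)). In particular, if αδ < βγ, then F(q) < F(0) for all sufficiently small q > 0. -/
open Real Set

/-- For positive `α β γ δ`, the function
`F q = h(α-αq)+h(β+αq)+h(γ+αq)+h(δ+βq)+h(δ+γq)-h(δ+αq+βq+γq)`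
(with `h x = -x log x`) satisfies `F 0 = h α + h β + h γ + h δ`,
`F' 0 = α·log(αδ/(βγ))`, and if `αδ < βγ` then `F q < F 0` for all
sufficiently small `q > 0`. -/
theorem stmt2 (α β γ δ : ℝ) (hα : 0 < α) (hβ : 0 < β) (hγ : 0 < γ) (hδ : 0 < δ)
    (h : ℝ → ℝ) (hh : ∀ t, h t = -t * Real.log t)
    (F : ℝ → ℝ)
    (hF : ∀ q, F q = h (α - α*q) + h (β + α*q) + h (γ + α*q) + h (δ + β*q)
      + h (δ + γ*q) - h (δ + α*q + β*q + γ*q)) :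
    F 0 = h α + h β + h γ + h δ ∧
    HasDerivAt F (α * Real.log (α * δ / (β * γ))) 0 ∧
    (α * δ < β * γ → ∀ᶠ q in nhdsWithin 0 (Set.Ioi 0), F q < F 0) := by
  have key : ∀ (c d : ℝ), c ≠ 0 →
      HasDerivAt (fun q : ℝ => -((c + d*q) * Real.log (c + d*q))) (-(d * (Real.log c + 1))) 0 := by
    intro c d hc
    have h1 : HasDerivAt (fun q : ℝ => c + d*q) d 0 := by
      have h1' := ((hasDerivAt_id (0:ℝ)).const_mul d).const_add c
      rw [mul_one] at h1'
      exact h1'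
    have hc0 : c + d*0 ≠ 0 := by simpa using hc
    have := ((Real.hasDerivAt_mul_log hc0).comp 0 h1).neg
    refine this.congr_deriv ?_
    simp only [mul_zero, add_zero]
    ring
  have hF0 : F 0 = h α + h β + h γ + h δ := by
    rw [hF]; norm_num
  have hd : HasDerivAt F (α * Real.log (α * δ / (β * γ))) 0 := by
    have hFeq : F = fun q => -((α + (-α)*q) * Real.log (α + (-α)*q))
        + -((β + α*q) * Real.log (β + α*q)) + -((γ + α*q) * Real.log (γ + α*q))
        + -((δ + β*q) * Real.log (δ + β*q)) + -((δ + γ*q) * Real.log (δ + γ*q))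
        - -((δ + (α+β+γ)*q) * Real.log (δ + (α+β+γ)*q)) := by
      funext q
      rw [hF, hh, hh, hh, hh, hh, hh]
      ring_nf
    rw [hFeq]
    have H := (((((key α (-α) hα.ne').add (key β α hβ.ne')).add (key γ α hγ.ne')).add
      (key δ β hδ.ne')).add (key δ γ hδ.ne')).sub (key δ (α+β+γ) hδ.ne')
    refine H.congr_deriv ?_
    rw [Real.log_div (by positivity) (by positivity), Real.log_mul hα.ne' hδ.ne',
      Real.log_mul hβ.ne' hγ.ne']
    ring
  refine ⟨hF0, hd, fun hlt => ?_⟩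
  have hneg : α * Real.log (α * δ / (β * γ)) < 0 := by
    apply mul_neg_of_pos_of_neg hα
    apply Real.log_neg (by positivity)
    rw [div_lt_one (by positivity)]
    exact hlt
  have hslope := hasDerivAt_iff_tendsto_slope.mp hd
  have htend : Filter.Tendsto (slope F 0) (nhdsWithin 0 (Set.Ioi 0))
      (nhds (α * Real.log (α * δ / (β * γ)))) :=
    hslope.mono_left (nhdsWithin_mono 0 (fun x hx => ne_of_gt hx))
  have hev : ∀ᶠ q in nhdsWithin 0 (Set.Ioi 0), slope F 0 q < 0 :=
    htend.eventually_lt_const hneg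
  filter_upwards [hev, self_mem_nhdsWithin] with q hq hq0
  have hq0' : (0:ℝ) < q := hq0
  have h2 : (F q - F 0) / q < 0 := by simpa [slope_def_field] using hq
  have h3 := (div_lt_iff₀ hq0').mp h2
  linarith
end

section
/- Let α, β, γ > 0. Define G(q) = h(α − αq) + h(β + αq) + h(γ + αq) + q·h(β) + q·h(γ) − q·h(α+β+γ) − α·h(q), where h(x) = −x log x. Then G(0) = h(α) + h(β) + h(γ) and G(q) < G(0) for all sufficiently small q > 0. -/
open Real Set Filter

/-- For positive `α β γ`, the function
`G q = h(α-αq)+h(β+αq)+h(γ+αq)+q·h β+q·h γ-q·h(α+β+γ)-α·h q`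
(with `h x = -x log x`) satisfies `G 0 = h α + h β + h γ` and
`G q < G 0` for all sufficiently small `q > 0`. -/
theorem stmt3 (α β γ : ℝ) (hα : 0 < α) (hβ : 0 < β) (hγ : 0 < γ)
    (h : ℝ → ℝ) (hh : ∀ t, h t = -t * Real.log t)
    (G : ℝ → ℝ)
    (hG : ∀ q, G q = h (α - α*q) + h (β + α*q) + h (γ + α*q)
      + q * h β + q * h γ - q * h (α + β + γ) - α * h q) :
    G 0 = h α + h β + h γ ∧
    (∀ᶠ q in nhdsWithin 0 (Set.Ioi 0), G q < G 0) := by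
  have hG0 : G 0 = h α + h β + h γ := by
    rw [hG 0, hh 0]
    simp
  refine ⟨hG0, ?_⟩
  set c : ℝ := h β + h γ - h (α + β + γ) with hc
  set Φ : ℝ → ℝ := fun q =>
    -((α - α*q) * Real.log (α - α*q)) - ((β + α*q) * Real.log (β + α*q))
      - ((γ + α*q) * Real.log (γ + α*q)) + q * c with hΦdef
  have hGΦ : ∀ q, G q = Φ q + α * (q * Real.log q) := by
    intro q
    rw [hG q, hh (α - α*q), hh (β + α*q), hh (γ + α*q), hh q, hΦdef, hc]
    ring
  have hΦ0 : Φ 0 = G 0 := by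
    have := hGΦ 0
    simp at this
    linarith [this]
  -- derivative of Φ at 0
  have inner1 : HasDerivAt (fun q : ℝ => α - α*q) (-α) 0 := by
    simpa using ((hasDerivAt_id (0:ℝ)).const_mul α).const_sub α
  have inner2 : HasDerivAt (fun q : ℝ => β + α*q) α 0 := by
    simpa using ((hasDerivAt_id (0:ℝ)).const_mul α).const_add β
  have inner3 : HasDerivAt (fun q : ℝ => γ + α*q) α 0 := by
    simpa using ((hasDerivAt_id (0:ℝ)).const_mul α).const_add γ
  have e1 : α - α*(0:ℝ) = α := by ring
  have e2 : β + α*(0:ℝ) = β := by ring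
  have e3 : γ + α*(0:ℝ) = γ := by ring
  have out1 : HasDerivAt (fun x : ℝ => x * Real.log x) (Real.log α + 1) (α - α*0) := by
    rw [e1]; exact Real.hasDerivAt_mul_log hα.ne'
  have out2 : HasDerivAt (fun x : ℝ => x * Real.log x) (Real.log β + 1) (β + α*0) := by
    rw [e2]; exact Real.hasDerivAt_mul_log hβ.ne'
  have out3 : HasDerivAt (fun x : ℝ => x * Real.log x) (Real.log γ + 1) (γ + α*0) := by
    rw [e3]; exact Real.hasDerivAt_mul_log hγ.ne'
  have A1 : HasDerivAt (fun q : ℝ => (α - α*q) * Real.log (α - α*q))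
      ((Real.log α + 1) * (-α)) 0 := by have := out1.comp 0 inner1; exact this
  have A2 : HasDerivAt (fun q : ℝ => (β + α*q) * Real.log (β + α*q))
      ((Real.log β + 1) * α) 0 := by have := out2.comp 0 inner2; exact this
  have A3 : HasDerivAt (fun q : ℝ => (γ + α*q) * Real.log (γ + α*q))
      ((Real.log γ + 1) * α) 0 := by have := out3.comp 0 inner3; exact this
  have Alin : HasDerivAt (fun q : ℝ => q * c) c 0 := by
    simpa using (hasDerivAt_id (0:ℝ)).mul_const c
  have hΦderiv : HasDerivAt Φ
      (-((Real.log α + 1) * (-α)) - (Real.log β + 1) * α - (Real.log γ + 1) * α + c) 0 :=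
    ((A1.neg.sub A2).sub A3).add Alin
  set d : ℝ := -((Real.log α + 1) * (-α)) - (Real.log β + 1) * α - (Real.log γ + 1) * α + c
  -- slope tendsto
  have hslope : Tendsto (slope Φ 0) (nhdsWithin 0 (Set.Ioi 0)) (nhds d) := by
    have := hasDerivAt_iff_tendsto_slope.mp hΦderiv
    exact this.mono_left (nhdsWithin_mono 0 (fun x hx => ne_of_gt hx))
  have hlog : Tendsto (fun q : ℝ => α * Real.log q) (nhdsWithin 0 (Set.Ioi 0)) atBot := by
    have hl : Tendsto Real.log (nhdsWithin 0 (Set.Ioi 0)) atBot :=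
      Real.tendsto_log_nhdsNE_zero.mono_left
        (nhdsWithin_mono 0 (fun x hx => ne_of_gt hx))
    exact hl.const_mul_atBot hα
  have hsum : Tendsto (fun q : ℝ => slope Φ 0 q + α * Real.log q)
      (nhdsWithin 0 (Set.Ioi 0)) atBot := hslope.add_atBot hlog
  have hev : ∀ᶠ q in nhdsWithin 0 (Set.Ioi 0),
      slope Φ 0 q + α * Real.log q < 0 := hsum.eventually (eventually_lt_atBot 0)
  filter_upwards [hev, self_mem_nhdsWithin] with q hq hq0
  have hq0' : (0:ℝ) < q := hq0
  have hslopeq : slope Φ 0 q = (Φ q - Φ 0) / q := by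
    simp [slope_def_field, div_eq_iff hq0'.ne']
  have key : G q - G 0 = q * (slope Φ 0 q + α * Real.log q) := by
    rw [hslopeq, hGΦ q, ← hΦ0]
    field_simp
    ring
  have : G q - G 0 < 0 := by
    rw [key]; exact mul_neg_of_pos_of_neg hq0' hq
  linarith
end

section
/- Let φ and ψ be real-valued functionals of joint distributions such that φ depends only on the marginal of (A,B) and ψ depends only on the marginal of (B,C). Suppose for some constant k ≥ 0 the inequality φ + ψ ≥ −k·I(A;C|B) holds for every joint distribution of (A,B,C) on given finite alphabets. Then φ + ψ ≥ 0 holds for every joint distribution of (A,B,C) on those alphabets. -/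
open Real BigOperators Finset

section Defs
variable {Ω : Type} [Fintype Ω]

/-- `p` is a probability mass function on the finite sample space `Ω`. -/
def IsPmf (p : Ω → ℝ) : Prop := (∀ ω, 0 ≤ p ω) ∧ ∑ ω, p ω = 1

/-- Distribution of the random variable `f` under `p`. -/
noncomputable def distOf (p : Ω → ℝ) {α : Type} [Fintype α] [DecidableEq α]
    (f : Ω → α) : α → ℝ := fun a => ∑ ω, if f ω = a then p ω else 0

/-- Shannon entropy (in nats) of the random variable `f` under `p`. -/
noncomputable def ent (p : Ω → ℝ) {α : Type} [Fintype α] [DecidableEq α]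
    (f : Ω → α) : ℝ := ∑ a, Real.negMulLog (distOf p f a)

/-- Mutual information `I(f;g)` under `p`. -/
noncomputable def mi (p : Ω → ℝ) {α β : Type} [Fintype α] [DecidableEq α]
    [Fintype β] [DecidableEq β] (f : Ω → α) (g : Ω → β) : ℝ :=
  ent p f + ent p g - ent p (fun ω => (f ω, g ω))

/-- Conditional mutual information `I(f;g|h)` under `p`. -/
noncomputable def cmi (p : Ω → ℝ) {α β γ : Type} [Fintype α] [DecidableEq α]
    [Fintype β] [DecidableEq β] [Fintype γ] [DecidableEq γ]
    (f : Ω → α) (g : Ω → β) (h : Ω → γ) : ℝ :=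
  ent p (fun ω => (f ω, h ω)) + ent p (fun ω => (g ω, h ω))
    - ent p (fun ω => (f ω, g ω, h ω)) - ent p h

end Defs

/-- Tension region of `(X,Y)`: the set of triples
`(I(X;Z|Y), I(Y;Z|X), I(X;Y|Z))` as `Z` ranges over all finitely supported
random variables jointly distributed with `(X,Y)`. -/
def tension {Ω : Type} [Fintype Ω] {α β : Type} [Fintype α] [DecidableEq α]
    [Fintype β] [DecidableEq β] (p : Ω → ℝ) (X : Ω → α) (Y : Ω → β) :
    Set (ℝ × ℝ × ℝ) :=
  { t | ∃ (m : ℕ) (q : α × β × Fin m → ℝ), IsPmf q ∧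
      distOf q (fun w => (w.1, w.2.1)) = distOf p (fun ω => (X ω, Y ω)) ∧
      t = (cmi q (fun w => w.1) (fun w => w.2.2) (fun w => w.2.1),
           cmi q (fun w => w.2.1) (fun w => w.2.2) (fun w => w.1),
           cmi q (fun w => w.1) (fun w => w.2.1) (fun w => w.2.2)) }

variable {A B C : Type} [Fintype A] [DecidableEq A] [Fintype B] [DecidableEq B]
  [Fintype C] [DecidableEq C]

noncomputable def m12 (p : A × B × C → ℝ) (a : A) (b : B) : ℝ := ∑ c, p (a, b, c)
noncomputable def m23 (p : A × B × C → ℝ) (b : B) (c : C) : ℝ := ∑ a, p (a, b, c)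

lemma sum_if_const {γ : Type*} [Fintype γ] (P : Prop) [Decidable P] (f : γ → ℝ) :
    ∑ c, (if P then f c else 0) = if P then ∑ c, f c else 0 := by
  split <;> simp

section DistLemmas
set_option linter.unusedSectionVars false
variable {A B C : Type} [Fintype A] [DecidableEq A] [Fintype B] [DecidableEq B]
  [Fintype C] [DecidableEq C] (q : A × B × C → ℝ)

lemma distOf_ab (a : A) (b : B) :
    (∑ x : A × B × C, if (x.1, x.2.1) = (a, b) then q x else 0) = ∑ c, q (a, b, c) := by
  simp only [Fintype.sum_prod_type, Prod.mk.injEq, ite_and]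
  simp only [sum_if_const]
  simp only [Finset.sum_ite_eq', Finset.mem_univ, if_true]
  rw [Finset.sum_congr rfl fun c (_ : c ∈ univ) => sum_if_const (c = b) fun c_1 => q (a, c, c_1)]
  simp only [Finset.sum_ite_eq', Finset.mem_univ, if_true]

lemma distOf_cb (c : C) (b : B) :
    (∑ x : A × B × C, if (x.2.2, x.2.1) = (c, b) then q x else 0) = ∑ a, q (a, b, c) := by
  simp only [Fintype.sum_prod_type, Prod.mk.injEq, ite_and]
  simp only [Finset.sum_ite_eq', Finset.mem_univ, if_true]

lemma distOf_acb (a : A) (c : C) (b : B) :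
    (∑ x : A × B × C, if (x.1, x.2.2, x.2.1) = (a, c, b) then q x else 0) = q (a, b, c) := by
  simp only [Fintype.sum_prod_type, Prod.mk.injEq, ite_and]
  simp only [sum_if_const]
  simp only [Finset.sum_ite_eq', Finset.mem_univ, if_true]

lemma distOf_b (b : B) :
    (∑ x : A × B × C, if x.2.1 = b then q x else 0) = ∑ a, ∑ c, q (a, b, c) := by
  simp only [Fintype.sum_prod_type]
  rw [Finset.sum_congr rfl fun a' (_ : a' ∈ univ) => Finset.sum_congr rfl
    fun b' (_ : b' ∈ univ) => sum_if_const (b' = b) fun c' => q (a', b', c')]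
  simp only [Finset.sum_ite_eq', Finset.mem_univ, if_true]

end DistLemmas

lemma mul_negMulLog_div (x z : ℝ) (hz : z ≠ 0) :
    z * Real.negMulLog (x / z) = Real.negMulLog x + x * Real.log z := by
  rcases eq_or_ne x 0 with hx | hx
  · simp [hx]
  · rw [Real.negMulLog, Real.negMulLog, Real.log_div hx hz]
    field_simp
    ring

/-- If `φ` depends only on the `(A,B)` marginal, `ψ` only on the `(B,C)`
marginal, and `φ + ψ ≥ -k·I(A;C|B)` for every joint distribution (with
`k ≥ 0`), then `φ + ψ ≥ 0` for every joint distribution. -/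
theorem stmt6 (φ ψ : (A × B × C → ℝ) → ℝ) (k : ℝ) (hk : 0 ≤ k)
    (hφ : ∀ p q : A × B × C → ℝ, IsPmf p → IsPmf q →
      (∀ a b, m12 p a b = m12 q a b) → φ p = φ q)
    (hψ : ∀ p q : A × B × C → ℝ, IsPmf p → IsPmf q →
      (∀ b c, m23 p b c = m23 q b c) → ψ p = ψ q)
    (hineq : ∀ p : A × B × C → ℝ, IsPmf p →
      φ p + ψ p ≥ -k * cmi p (fun x => x.1) (fun x => x.2.2) (fun x => x.2.1)) :
    ∀ p : A × B × C → ℝ, IsPmf p → φ p + ψ p ≥ 0 := by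
    classical
  intro p hp
  set pB : B → ℝ := fun b => ∑ a, m12 p a b with hpBdef
  set q : A × B × C → ℝ := fun x =>
    if pB x.2.1 = 0 then 0 else m12 p x.1 x.2.1 * m23 p x.2.1 x.2.2 / pB x.2.1 with hqdef
  have hpnn := hp.1
  have hm12nn : ∀ a b, 0 ≤ m12 p a b := fun a b => Finset.sum_nonneg fun c _ => hpnn _
  have hm23nn : ∀ b c, 0 ≤ m23 p b c := fun b c => Finset.sum_nonneg fun a _ => hpnn _
  have hpBnn : ∀ b, 0 ≤ pB b := fun b => Finset.sum_nonneg fun a _ => hm12nn a b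
  have hpB23 : ∀ b, pB b = ∑ c, m23 p b c := by
    intro b
    simp only [hpBdef, m12, m23]
    exact Finset.sum_comm
  have hzero12 : ∀ b, pB b = 0 → ∀ a, m12 p a b = 0 := by
    intro b hb a
    exact (Finset.sum_eq_zero_iff_of_nonneg (fun a _ => hm12nn a b)).1 hb a (Finset.mem_univ a)
  have hzero23 : ∀ b, pB b = 0 → ∀ c, m23 p b c = 0 := by
    intro b hb c
    have hb' : ∑ c, m23 p b c = 0 := (hpB23 b).symm.trans hb
    exact (Finset.sum_eq_zero_iff_of_nonneg (fun c _ => hm23nn b c)).1 hb' c (Finset.mem_univ c)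
  have hsumc : ∀ a b, ∑ c, q (a, b, c) = m12 p a b := by
    intro a b
    by_cases hb : pB b = 0
    · simp [hqdef, hb, hzero12 b hb a]
    · simp only [hqdef, if_neg hb]
      rw [← Finset.sum_div, ← Finset.mul_sum, ← hpB23 b]
      field_simp
  have hsuma : ∀ b c, ∑ a, q (a, b, c) = m23 p b c := by
    intro b c
    by_cases hb : pB b = 0
    · simp [hqdef, hb, hzero23 b hb c]
    · simp only [hqdef, if_neg hb]
      rw [← Finset.sum_div, ← Finset.sum_mul]
      rw [show (∑ a, m12 p a b) = pB b from rfl]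
      field_simp
  have hqnn : ∀ x, 0 ≤ q x := by
    intro x
    simp only [hqdef]
    split
    · exact le_refl 0
    · exact div_nonneg (mul_nonneg (hm12nn _ _) (hm23nn _ _)) (hpBnn _)
  have hqsum : ∑ x, q x = 1 := by
    have h1 := hp.2
    simp only [Fintype.sum_prod_type] at h1 ⊢
    calc ∑ a, ∑ b, ∑ c, q (a, b, c) = ∑ a, ∑ b, m12 p a b :=
          Finset.sum_congr rfl fun a _ => Finset.sum_congr rfl fun b _ => hsumc a b
      _ = 1 := by simpa [m12] using h1
  have hqpmf : IsPmf q := ⟨hqnn, hqsum⟩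
  have hm12q : ∀ a b, m12 q a b = m12 p a b := fun a b => by simpa [m12] using hsumc a b
  have hm23q : ∀ b c, m23 q b c = m23 p b c := fun b c => by simpa [m23] using hsuma b c
  -- distribution computations
  have hd12 : ∀ y : A × B, distOf q (fun x => (x.1, x.2.1)) y = m12 p y.1 y.2 := by
    rintro ⟨a, b⟩
    simp only [distOf]
    exact (distOf_ab q a b).trans (hsumc a b)
  have hd23 : ∀ y : C × B, distOf q (fun x => (x.2.2, x.2.1)) y = m23 p y.2 y.1 := by
    rintro ⟨c, b⟩
    simp only [distOf]
    exact (distOf_cb q c b).trans (hsuma b c)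
  have hd123 : ∀ y : A × C × B, distOf q (fun x => (x.1, x.2.2, x.2.1)) y
      = q (y.1, y.2.2, y.2.1) := by
    rintro ⟨a, c, b⟩
    simp only [distOf]
    exact distOf_acb q a c b
  have hdB : ∀ b, distOf q (fun x => x.2.1) b = pB b := by
    intro b
    simp only [distOf]
    rw [distOf_b q b]
    exact Finset.sum_congr rfl fun a _ => hsumc a b
  -- entropy computations
  have e1 : ent q (fun x => (x.1, x.2.1)) = ∑ a, ∑ b, Real.negMulLog (m12 p a b) := by
    simp only [ent, hd12, Fintype.sum_prod_type]
  have e2 : ent q (fun x => (x.2.2, x.2.1)) = ∑ c, ∑ b, Real.negMulLog (m23 p b c) := by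
    simp only [ent, hd23, Fintype.sum_prod_type]
  have e3 : ent q (fun x => (x.1, x.2.2, x.2.1))
      = ∑ a, ∑ c, ∑ b, Real.negMulLog (q (a, b, c)) := by
    simp only [ent, hd123, Fintype.sum_prod_type]
  have e4 : ent q (fun x => x.2.1) = ∑ b, Real.negMulLog (pB b) := by
    simp only [ent, hdB]
  -- the key per-b identity
  have key : ∀ b, (∑ a, ∑ c, Real.negMulLog (q (a, b, c)))
      = (∑ a, Real.negMulLog (m12 p a b)) + (∑ c, Real.negMulLog (m23 p b c))
        - Real.negMulLog (pB b) := by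
    intro b
    by_cases hb : pB b = 0
    · simp [hqdef, hb, hzero12 b hb, hzero23 b hb]
    · have hq' : ∀ a c, q (a, b, c) = (m12 p a b / pB b) * m23 p b c := by
        intro a c
        simp only [hqdef, if_neg hb]
        ring
      calc (∑ a, ∑ c, Real.negMulLog (q (a, b, c)))
          = ∑ a, ∑ c, (m23 p b c * Real.negMulLog (m12 p a b / pB b)
              + (m12 p a b / pB b) * Real.negMulLog (m23 p b c)) := by
            refine Finset.sum_congr rfl fun a _ => Finset.sum_congr rfl fun c _ => ?_
            rw [hq' a c, Real.negMulLog_mul]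
        _ = ∑ a, ((∑ c, m23 p b c) * Real.negMulLog (m12 p a b / pB b)
              + (m12 p a b / pB b) * ∑ c, Real.negMulLog (m23 p b c)) := by
            refine Finset.sum_congr rfl fun a _ => ?_
            rw [Finset.sum_add_distrib, ← Finset.sum_mul, ← Finset.mul_sum]
        _ = ∑ a, ((Real.negMulLog (m12 p a b) + m12 p a b * Real.log (pB b))
              + (m12 p a b / pB b) * ∑ c, Real.negMulLog (m23 p b c)) := by
            refine Finset.sum_congr rfl fun a _ => ?_
            rw [← hpB23 b, mul_negMulLog_div _ _ hb]
        _ = ((∑ a, Real.negMulLog (m12 p a b)) + (∑ a, m12 p a b) * Real.log (pB b))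
              + ((∑ a, m12 p a b) / pB b) * ∑ c, Real.negMulLog (m23 p b c) := by
            rw [Finset.sum_add_distrib, Finset.sum_add_distrib, ← Finset.sum_mul,
              ← Finset.sum_mul, ← Finset.sum_div]
        _ = (∑ a, Real.negMulLog (m12 p a b)) + (∑ c, Real.negMulLog (m23 p b c))
              - Real.negMulLog (pB b) := by
            rw [show (∑ a, m12 p a b) = pB b from rfl, div_self hb, one_mul,
              Real.negMulLog]
            ring
  -- conditional mutual information vanishes for q
  have hcmi : cmi q (fun x => x.1) (fun x => x.2.2) (fun x => x.2.1) = 0 := by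
    rw [cmi, e1, e2, e3, e4]
    have s1 : (∑ a, ∑ b, Real.negMulLog (m12 p a b))
        = ∑ b, ∑ a, Real.negMulLog (m12 p a b) := Finset.sum_comm
    have s2 : (∑ c, ∑ b, Real.negMulLog (m23 p b c))
        = ∑ b, ∑ c, Real.negMulLog (m23 p b c) := Finset.sum_comm
    have s3 : (∑ a, ∑ c, ∑ b, Real.negMulLog (q (a, b, c)))
        = ∑ b, ∑ a, ∑ c, Real.negMulLog (q (a, b, c)) := by
      rw [show (∑ a, ∑ c, ∑ b, Real.negMulLog (q (a, b, c)))
          = ∑ a, ∑ b, ∑ c, Real.negMulLog (q (a, b, c)) from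
        Finset.sum_congr rfl fun a _ => Finset.sum_comm]
      exact Finset.sum_comm
    rw [s1, s2, s3, ← Finset.sum_add_distrib, ← Finset.sum_sub_distrib,
      ← Finset.sum_sub_distrib]
    refine Finset.sum_eq_zero fun b _ => ?_
    rw [key b]
    ring
  have h0 := hineq q hqpmf
  rw [hcmi, mul_zero] at h0
  have hφeq := hφ q p hqpmf hp (fun a b => hm12q a b)
  have hψeq := hψ q p hqpmf hp (fun b c => hm23q b c)
  linarith
end

section
/- For any jointly distributed finitely supported random variables U, V, X, Y, Z, the inequality Ing(U,V,X,Y) + Δ(X,Y,Z) ≥ −3·I(U,V ; Z | X,Y) holds, where Ing(U,V,X,Y) = −I(X;Y) + I(X;Y|U) + I(X;Y|V) + I(U;V) and Δ(X,Y,Z) = I(X;Z|Y) + I(Y;Z|X) + I(X;Y|Z). -/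
open Real BigOperators Finset

section AuxLemmas
variable {Ω : Type} [Fintype Ω] {α β γ : Type}
  [Fintype α] [DecidableEq α] [Fintype β] [DecidableEq β] [Fintype γ] [DecidableEq γ]

lemma distOf_nonneg {p : Ω → ℝ} (hp : IsPmf p) (f : Ω → α) (a : α) :
    0 ≤ distOf p f a := by
  apply Finset.sum_nonneg
  intro ω _
  split <;> simp [hp.1 ω]

lemma sum_distOf {p : Ω → ℝ} (hp : IsPmf p) (f : Ω → α) :
    ∑ a, distOf p f a = 1 := by
  unfold distOf
  rw [Finset.sum_comm]
  rw [← hp.2]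
  refine Finset.sum_congr rfl fun ω _ => ?_
  simp

lemma distOf_apply_eq {p : Ω → ℝ} (f : Ω → α) (g : Ω → β)
    (hfg : ∀ ω ω', f ω = f ω' ↔ g ω = g ω') (ω0 : Ω) :
    distOf p f (f ω0) = distOf p g (g ω0) := by
  unfold distOf
  refine Finset.sum_congr rfl fun ω _ => ?_
  by_cases h : f ω = f ω0
  · rw [if_pos h, if_pos ((hfg ω ω0).mp h)]
  · rw [if_neg h, if_neg (fun hc => h ((hfg ω ω0).mpr hc))]

lemma distOf_eq_zero {p : Ω → ℝ} (f : Ω → α) (a : α) (ha : ∀ ω, f ω ≠ a) :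
    distOf p f a = 0 := by
  unfold distOf
  refine Finset.sum_eq_zero fun ω _ => ?_
  simp [ha ω]

lemma ent_congr (p : Ω → ℝ) (f : Ω → α) (g : Ω → β)
    (hfg : ∀ ω ω', f ω = f ω' ↔ g ω = g ω') : ent p f = ent p g := by
  unfold ent
  rw [← Finset.sum_subset (Finset.subset_univ (Finset.image f Finset.univ))
      (fun a _ ha => by
        rw [distOf_eq_zero f a, Real.negMulLog_zero]
        intro ω hω
        exact ha (Finset.mem_image.mpr ⟨ω, Finset.mem_univ ω, hω⟩)),
    ← Finset.sum_subset (Finset.subset_univ (Finset.image g Finset.univ))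
      (fun b _ hb => by
        rw [distOf_eq_zero g b, Real.negMulLog_zero]
        intro ω hω
        exact hb (Finset.mem_image.mpr ⟨ω, Finset.mem_univ ω, hω⟩))]
  refine Finset.sum_bij
    (fun a ha => g (Finset.mem_image.mp ha).choose) ?_ ?_ ?_ ?_
  · intro a ha
    exact Finset.mem_image.mpr ⟨_, Finset.mem_univ _, rfl⟩
  · intro a1 ha1 a2 ha2 heq
    have h1 := (Finset.mem_image.mp ha1).choose_spec.2
    have h2 := (Finset.mem_image.mp ha2).choose_spec.2
    rw [← h1, ← h2]
    exact ((hfg _ _).mpr heq)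
  · intro b hb
    obtain ⟨ω, -, rfl⟩ := Finset.mem_image.mp hb
    refine ⟨f ω, Finset.mem_image.mpr ⟨ω, Finset.mem_univ ω, rfl⟩, ?_⟩
    have h1 := (Finset.mem_image.mp (Finset.mem_image.mpr
      ⟨ω, Finset.mem_univ ω, rfl⟩ : f ω ∈ Finset.image f Finset.univ)).choose_spec.2
    exact (hfg _ _).mp h1
  · intro a ha
    have h1 := (Finset.mem_image.mp ha).choose_spec.2
    conv_lhs => rw [← h1]
    rw [distOf_apply_eq f g hfg]

-- marginalize out middle coordinate
lemma sum_distOf_mid (p : Ω → ℝ) (f : Ω → α) (g : Ω → β) (h : Ω → γ) (a : α) (c : γ) :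
    ∑ b, distOf p (fun ω => (f ω, g ω, h ω)) (a, b, c)
      = distOf p (fun ω => (f ω, h ω)) (a, c) := by
  unfold distOf
  rw [Finset.sum_comm]
  refine Finset.sum_congr rfl fun ω _ => ?_
  by_cases h1 : f ω = a <;> by_cases h2 : h ω = c <;>
    simp [Prod.ext_iff, h1, h2]

-- marginalize out first coordinate
lemma sum_distOf_fst (p : Ω → ℝ) (f : Ω → α) (g : Ω → β) (b : β) :
    ∑ a, distOf p (fun ω => (f ω, g ω)) (a, b) = distOf p g b := by
  unfold distOf
  rw [Finset.sum_comm]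
  refine Finset.sum_congr rfl fun ω _ => ?_
  by_cases h2 : g ω = b <;> simp [Prod.ext_iff, h2]

-- marginalize out first of triple
lemma sum_distOf_fst3 (p : Ω → ℝ) (f : Ω → α) (g : Ω → β) (h : Ω → γ) (b : β) (c : γ) :
    ∑ a, distOf p (fun ω => (f ω, g ω, h ω)) (a, b, c)
      = distOf p (fun ω => (g ω, h ω)) (b, c) := by
  unfold distOf
  rw [Finset.sum_comm]
  refine Finset.sum_congr rfl fun ω _ => ?_
  by_cases h1 : g ω = b <;> by_cases h2 : h ω = c <;>
    simp [Prod.ext_iff, h1, h2]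

lemma cmi_nonneg {p : Ω → ℝ} (hp : IsPmf p) (f : Ω → α) (g : Ω → β) (h : Ω → γ) :
    0 ≤ cmi p f g h := by
  set r : α × β × γ → ℝ := distOf p (fun ω => (f ω, g ω, h ω)) with hr
  set s : α × γ → ℝ := distOf p (fun ω => (f ω, h ω)) with hs
  set t : β × γ → ℝ := distOf p (fun ω => (g ω, h ω)) with ht
  set q : γ → ℝ := distOf p h with hq
  have hrn : ∀ z, 0 ≤ r z := fun z => distOf_nonneg hp _ z
  have hsn : ∀ z, 0 ≤ s z := fun z => distOf_nonneg hp _ z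
  have htn : ∀ z, 0 ≤ t z := fun z => distOf_nonneg hp _ z
  have hqn : ∀ c, 0 ≤ q c := fun c => distOf_nonneg hp _ c
  have hm1 : ∀ a c, ∑ b, r (a, b, c) = s (a, c) := fun a c => sum_distOf_mid p f g h a c
  have hm2 : ∀ b c, ∑ a, r (a, b, c) = t (b, c) := fun b c => sum_distOf_fst3 p f g h b c
  have hm3 : ∀ c, ∑ a, s (a, c) = q c := fun c => sum_distOf_fst p f h c
  have hm4 : ∀ c, ∑ b, t (b, c) = q c := fun c => sum_distOf_fst p g h c
  have hr1 : ∑ z : α × β × γ, r z = 1 := sum_distOf hp _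
  have hexp : ∀ (L S : ℝ) (w : β → ℝ), (∑ b, w b) = S → ∑ b, -(w b * L) = -(S * L) := by
    intro L S w hw
    rw [← hw, Finset.sum_mul]
    exact Finset.sum_neg_distrib _
  have hexpa : ∀ (L S : ℝ) (w : α → ℝ), (∑ a, w a) = S → ∑ a, -(w a * L) = -(S * L) := by
    intro L S w hw
    rw [← hw, Finset.sum_mul]
    exact Finset.sum_neg_distrib _
  have e1 : (∑ z : α × β × γ, -(r z * Real.log (s (z.1, z.2.2))))
      = ent p (fun ω => (f ω, h ω)) := by
    rw [ent, ← hs]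
    simp only [Fintype.sum_prod_type]
    refine Finset.sum_congr rfl fun a _ => ?_
    rw [Finset.sum_comm]
    refine Finset.sum_congr rfl fun c _ => ?_
    rw [hexp _ _ _ (hm1 a c)]
    simp [Real.negMulLog]
  have e2 : (∑ z : α × β × γ, -(r z * Real.log (t z.2)))
      = ent p (fun ω => (g ω, h ω)) := by
    rw [ent, ← ht]
    simp only [Fintype.sum_prod_type]
    rw [Finset.sum_comm]
    refine Finset.sum_congr rfl fun b _ => ?_
    rw [Finset.sum_comm]
    refine Finset.sum_congr rfl fun c _ => ?_
    rw [hexpa _ _ _ (hm2 b c)]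
    simp [Real.negMulLog]
  have e3 : (∑ z : α × β × γ, -(r z * Real.log (r z)))
      = ent p (fun ω => (f ω, g ω, h ω)) := by
    rw [ent, ← hr]
    refine Finset.sum_congr rfl fun z _ => ?_
    simp [Real.negMulLog]
  have e4 : (∑ z : α × β × γ, -(r z * Real.log (q z.2.2))) = ent p h := by
    rw [ent, ← hq]
    simp only [Fintype.sum_prod_type]
    rw [show (∑ a, ∑ b, ∑ c, -(r (a, b, c) * Real.log (q c)))
          = ∑ a, ∑ c, ∑ b, -(r (a, b, c) * Real.log (q c)) from
        Finset.sum_congr rfl fun a _ => Finset.sum_comm]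
    rw [Finset.sum_comm]
    refine Finset.sum_congr rfl fun c _ => ?_
    have inner : ∀ a : α, (∑ b, -(r (a, b, c) * Real.log (q c)))
        = -(s (a, c) * Real.log (q c)) := fun a => hexp _ _ _ (hm1 a c)
    calc (∑ a, ∑ b, -(r (a, b, c) * Real.log (q c)))
        = ∑ a, -(s (a, c) * Real.log (q c)) := Finset.sum_congr rfl fun a _ => inner a
      _ = -(q c * Real.log (q c)) := hexpa _ _ _ (hm3 c)
      _ = Real.negMulLog (q c) := by simp [Real.negMulLog]
  have key : cmi p f g h = ∑ z : α × β × γ,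
      r z * (Real.log (r z) + Real.log (q z.2.2)
        - Real.log (s (z.1, z.2.2)) - Real.log (t z.2)) := by
    rw [cmi, ← e1, ← e2, ← e3, ← e4]
    rw [← Finset.sum_add_distrib, ← Finset.sum_sub_distrib, ← Finset.sum_sub_distrib]
    refine Finset.sum_congr rfl fun z _ => ?_
    ring
  rw [key]
  have lower : ∀ z : α × β × γ,
      r z - s (z.1, z.2.2) * t z.2 / q z.2.2
        ≤ r z * (Real.log (r z) + Real.log (q z.2.2)
          - Real.log (s (z.1, z.2.2)) - Real.log (t z.2)) := by
    rintro ⟨a, b, c⟩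
    dsimp only
    rcases eq_or_lt_of_le (hrn (a, b, c)) with hr0 | hr0
    · rw [← hr0]
      simp only [zero_mul, zero_sub, neg_nonpos, neg_le]
      have : (0:ℝ) ≤ s (a, c) * t (b, c) / q c :=
        div_nonneg (mul_nonneg (hsn _) (htn _)) (hqn c)
      linarith
    · have hsp : 0 < s (a, c) := lt_of_lt_of_le hr0 (by
        rw [← hm1 a c]
        exact Finset.single_le_sum (fun b _ => hrn (a, b, c)) (Finset.mem_univ b))
      have htp : 0 < t (b, c) := lt_of_lt_of_le hr0 (by
        rw [← hm2 b c]
        exact Finset.single_le_sum (fun a _ => hrn (a, b, c)) (Finset.mem_univ a))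
      have hqp : 0 < q c := lt_of_lt_of_le hsp (by
        rw [← hm3 c]
        exact Finset.single_le_sum (fun a _ => hsn (a, c)) (Finset.mem_univ a))
      have hx : 0 < s (a, c) * t (b, c) / (r (a, b, c) * q c) := by positivity
      have hlog := Real.log_le_sub_one_of_pos hx
      rw [Real.log_div (by positivity) (by positivity), Real.log_mul (ne_of_gt hsp)
        (ne_of_gt htp), Real.log_mul (ne_of_gt hr0) (ne_of_gt hqp)] at hlog
      have h2 : Real.log (r (a,b,c)) + Real.log (q c) - Real.log (s (a,c)) - Real.log (t (b,c))
          ≥ 1 - s (a, c) * t (b, c) / (r (a, b, c) * q c) := by linarith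
      have h3 := mul_le_mul_of_nonneg_left h2 (le_of_lt hr0)
      calc r (a,b,c) - s (a,c) * t (b,c) / q c
          = r (a,b,c) * (1 - s (a,c) * t (b,c) / (r (a,b,c) * q c)) := by
            field_simp
      _ ≤ _ := h3
  have sumst : (∑ z : α × β × γ, s (z.1, z.2.2) * t z.2 / q z.2.2) ≤ 1 := by
    have hq1 : ∑ c, q c = 1 := sum_distOf hp h
    have step : (∑ z : α × β × γ, s (z.1, z.2.2) * t z.2 / q z.2.2)
        = ∑ c, ∑ a, ∑ b, s (a, c) * t (b, c) / q c := by
      simp only [Fintype.sum_prod_type]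
      rw [show (∑ a, ∑ b, ∑ c, s (a, c) * t (b, c) / q c)
            = ∑ a, ∑ c, ∑ b, s (a, c) * t (b, c) / q c from
          Finset.sum_congr rfl fun a _ => Finset.sum_comm]
      exact Finset.sum_comm
    rw [step, ← hq1]
    refine Finset.sum_le_sum fun c _ => ?_
    rcases (hqn c).eq_or_lt with h0 | hpos
    · have hs0 : ∀ a, s (a, c) = 0 := by
        intro a
        have h3 := hm3 c
        rw [← h0] at h3
        exact (Finset.sum_eq_zero_iff_of_nonneg (fun a _ => hsn (a, c))).mp h3 a
          (Finset.mem_univ a)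
      simp [hs0, ← h0]
    · have inner : ∀ a, ∑ b, s (a, c) * t (b, c) / q c = s (a, c) := by
        intro a
        rw [← Finset.sum_div, ← Finset.mul_sum, hm4 c, mul_div_assoc,
          div_self (ne_of_gt hpos), mul_one]
      calc (∑ a, ∑ b, s (a, c) * t (b, c) / q c)
          = ∑ a, s (a, c) := Finset.sum_congr rfl fun a _ => inner a
        _ = q c := hm3 c
        _ ≤ q c := le_refl _
  calc (0:ℝ) = 1 - 1 := by ring
    _ ≤ (∑ z : α × β × γ, r z) - ∑ z : α × β × γ, s (z.1, z.2.2) * t z.2 / q z.2.2 := by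
        rw [hr1]; linarith
    _ = ∑ z : α × β × γ, (r z - s (z.1, z.2.2) * t z.2 / q z.2.2) :=
        (Finset.sum_sub_distrib _ _).symm
    _ ≤ _ := Finset.sum_le_sum fun z _ => lower z

end AuxLemmas

/-- `Ing(U,V,X,Y) + Δ(X,Y,Z) ≥ -3·I(UV;Z|XY)` is a Shannon inequality. -/
theorem stmt7 {Ω αU αV αX αY αZ : Type} [Fintype Ω]
    [Fintype αU] [DecidableEq αU] [Fintype αV] [DecidableEq αV]
    [Fintype αX] [DecidableEq αX] [Fintype αY] [DecidableEq αY]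
    [Fintype αZ] [DecidableEq αZ]
    (p : Ω → ℝ) (hp : IsPmf p)
    (U : Ω → αU) (V : Ω → αV) (X : Ω → αX) (Y : Ω → αY) (Z : Ω → αZ) :
    (-(mi p X Y) + cmi p X Y U + cmi p X Y V + mi p U V)
      + (cmi p X Z Y + cmi p Y Z X + cmi p X Y Z)
    ≥ -3 * cmi p (fun ω => (U ω, V ω)) Z (fun ω => (X ω, Y ω)) := by
  have c1 := cmi_nonneg hp U V Z (p := p)
  have c2 := cmi_nonneg hp U Z X (p := p)
  have c3 := cmi_nonneg hp U Z Y (p := p)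
  have c4 := cmi_nonneg hp U Z (fun ω => (V ω, X ω, Y ω)) (p := p)
  have c5 := cmi_nonneg hp V Z X (p := p)
  have c6 := cmi_nonneg hp V Z Y (p := p)
  have c7 := cmi_nonneg hp V Z (fun ω => (U ω, X ω, Y ω)) (p := p)
  have c8 := cmi_nonneg hp X Y (fun ω => (U ω, Z ω)) (p := p)
  have c9 := cmi_nonneg hp X Y (fun ω => (V ω, Z ω)) (p := p)
  have c10 := cmi_nonneg hp X Z (fun ω => (U ω, V ω, Y ω)) (p := p)
  have c11 := cmi_nonneg hp Y Z (fun ω => (U ω, V ω)) (p := p)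
  have e1 : ent p (fun ω => (X ω, Z ω)) = ent p (fun ω => (Z ω, X ω)) :=
    ent_congr p _ _ (fun ω ω' => by simp only [Prod.mk.injEq]; tauto)
  have e2 : ent p (fun ω => (Y ω, Z ω)) = ent p (fun ω => (Z ω, Y ω)) :=
    ent_congr p _ _ (fun ω ω' => by simp only [Prod.mk.injEq]; tauto)
  have e3 : ent p (fun ω => (X ω, Y ω, Z ω)) = ent p (fun ω => (Z ω, X ω, Y ω)) :=
    ent_congr p _ _ (fun ω ω' => by simp only [Prod.mk.injEq]; tauto)
  have e4 : ent p (fun ω => (U ω, Z ω, X ω)) = ent p (fun ω => (X ω, U ω, Z ω)) :=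
    ent_congr p _ _ (fun ω ω' => by simp only [Prod.mk.injEq]; tauto)
  have e5 : ent p (fun ω => (U ω, Z ω, Y ω)) = ent p (fun ω => (Y ω, U ω, Z ω)) :=
    ent_congr p _ _ (fun ω ω' => by simp only [Prod.mk.injEq]; tauto)
  have e6 : ent p (fun ω => (V ω, Z ω, X ω)) = ent p (fun ω => (X ω, V ω, Z ω)) :=
    ent_congr p _ _ (fun ω ω' => by simp only [Prod.mk.injEq]; tauto)
  have e7 : ent p (fun ω => (V ω, Z ω, Y ω)) = ent p (fun ω => (Y ω, V ω, Z ω)) :=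
    ent_congr p _ _ (fun ω ω' => by simp only [Prod.mk.injEq]; tauto)
  have e8 : ent p (fun ω => (U ω, V ω, Y ω)) = ent p (fun ω => (Y ω, U ω, V ω)) :=
    ent_congr p _ _ (fun ω ω' => by simp only [Prod.mk.injEq]; tauto)
  have e9 : ent p (fun ω => (U ω, V ω, Z ω)) = ent p (fun ω => (Z ω, U ω, V ω)) :=
    ent_congr p _ _ (fun ω ω' => by simp only [Prod.mk.injEq]; tauto)
  have e10 : ent p (fun ω => ((U ω, V ω), (X ω, Y ω))) = ent p (fun ω => (U ω, V ω, X ω, Y ω)) :=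
    ent_congr p _ _ (fun ω ω' => by simp only [Prod.mk.injEq]; tauto)
  have e11 : ent p (fun ω => (V ω, U ω, X ω, Y ω)) = ent p (fun ω => (U ω, V ω, X ω, Y ω)) :=
    ent_congr p _ _ (fun ω ω' => by simp only [Prod.mk.injEq]; tauto)
  have e12 : ent p (fun ω => (X ω, U ω, V ω, Y ω)) = ent p (fun ω => (U ω, V ω, X ω, Y ω)) :=
    ent_congr p _ _ (fun ω ω' => by simp only [Prod.mk.injEq]; tauto)
  have e13 : ent p (fun ω => (Z ω, V ω, X ω, Y ω)) = ent p (fun ω => (X ω, Y ω, V ω, Z ω)) :=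
    ent_congr p _ _ (fun ω ω' => by simp only [Prod.mk.injEq]; tauto)
  have e14 : ent p (fun ω => (Z ω, U ω, X ω, Y ω)) = ent p (fun ω => (X ω, Y ω, U ω, Z ω)) :=
    ent_congr p _ _ (fun ω ω' => by simp only [Prod.mk.injEq]; tauto)
  have e15 : ent p (fun ω => (Z ω, U ω, V ω, Y ω)) = ent p (fun ω => (Y ω, Z ω, U ω, V ω)) :=
    ent_congr p _ _ (fun ω ω' => by simp only [Prod.mk.injEq]; tauto)
  have e16 : ent p (fun ω => ((U ω, V ω), Z ω, X ω, Y ω)) = ent p (fun ω => (U ω, Z ω, V ω, X ω, Y ω)) :=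
    ent_congr p _ _ (fun ω ω' => by simp only [Prod.mk.injEq]; tauto)
  have e17 : ent p (fun ω => (V ω, Z ω, U ω, X ω, Y ω)) = ent p (fun ω => (U ω, Z ω, V ω, X ω, Y ω)) :=
    ent_congr p _ _ (fun ω ω' => by simp only [Prod.mk.injEq]; tauto)
  have e18 : ent p (fun ω => (X ω, Z ω, U ω, V ω, Y ω)) = ent p (fun ω => (U ω, Z ω, V ω, X ω, Y ω)) :=
    ent_congr p _ _ (fun ω ω' => by simp only [Prod.mk.injEq]; tauto)
  have e19 : ent p (fun ω => (X ω, Z ω, Y ω)) = ent p (fun ω => (X ω, Y ω, Z ω)) :=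
    ent_congr p _ _ (fun ω ω' => by simp only [Prod.mk.injEq]; tauto)
  have e20 : ent p (fun ω => (Y ω, Z ω, X ω)) = ent p (fun ω => (X ω, Y ω, Z ω)) :=
    ent_congr p _ _ (fun ω ω' => by simp only [Prod.mk.injEq]; tauto)
  have e21 : ent p (fun ω => (Y ω, X ω)) = ent p (fun ω => (X ω, Y ω)) :=
    ent_congr p _ _ (fun ω ω' => by simp only [Prod.mk.injEq]; tauto)
  have e22 : ent p (fun ω => (U ω, X ω)) = ent p (fun ω => (X ω, U ω)) :=
    ent_congr p _ _ (fun ω ω' => by simp only [Prod.mk.injEq]; tauto)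
  have e23 : ent p (fun ω => (U ω, Y ω)) = ent p (fun ω => (Y ω, U ω)) :=
    ent_congr p _ _ (fun ω ω' => by simp only [Prod.mk.injEq]; tauto)
  have e24 : ent p (fun ω => (V ω, X ω)) = ent p (fun ω => (X ω, V ω)) :=
    ent_congr p _ _ (fun ω ω' => by simp only [Prod.mk.injEq]; tauto)
  have e25 : ent p (fun ω => (V ω, Y ω)) = ent p (fun ω => (Y ω, V ω)) :=
    ent_congr p _ _ (fun ω ω' => by simp only [Prod.mk.injEq]; tauto)
  have e26 : ent p (fun ω => (U ω, X ω, Y ω)) = ent p (fun ω => (X ω, Y ω, U ω)) :=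
    ent_congr p _ _ (fun ω ω' => by simp only [Prod.mk.injEq]; tauto)
  have e27 : ent p (fun ω => (V ω, X ω, Y ω)) = ent p (fun ω => (X ω, Y ω, V ω)) :=
    ent_congr p _ _ (fun ω ω' => by simp only [Prod.mk.injEq]; tauto)
  simp only [mi, cmi] at c1 c2 c3 c4 c5 c6 c7 c8 c9 c10 c11 ⊢
  linarith
end

section
/- The tension region T(X;Y) of two finitely supported random variables is a convex subset of ℝ³. -/
open Real BigOperators Finset

set_option linter.unusedSectionVars false

section Aux
variable {Ω : Type} [Fintype Ω] {γ δ : Type} [Fintype γ] [DecidableEq γ]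
  [Fintype δ] [DecidableEq δ]

lemma distOf_sum_eq {p : Ω → ℝ} (hp : IsPmf p) (f : Ω → γ) :
    ∑ c, distOf p f c = 1 := by
  unfold distOf
  rw [Finset.sum_comm]
  simpa [Finset.sum_ite_eq] using hp.2

lemma exists_of_distOf_ne_zero {p : Ω → ℝ} {f : Ω → γ} {c : γ}
    (h : distOf p f c ≠ 0) : ∃ ω, f ω = c := by
  by_contra hcon
  push_neg at hcon
  exact h (Finset.sum_eq_zero fun ω _ => if_neg (hcon ω))

lemma distOf_comp (p : Ω → ℝ) (f : Ω → γ) (g : γ → δ) (c : δ) :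
    distOf p (fun ω => g (f ω)) c = ∑ a, if g a = c then distOf p f a else 0 := by
  unfold distOf
  have : ∀ a : γ, (if g a = c then (∑ ω, if f ω = a then p ω else 0) else 0)
      = ∑ ω, if g a = c then (if f ω = a then p ω else 0) else 0 := by
    intro a
    split_ifs <;> simp
  rw [Finset.sum_congr rfl fun a _ => this a, Finset.sum_comm]
  refine Finset.sum_congr rfl fun ω _ => ?_
  rw [Finset.sum_eq_single_of_mem (f ω) (Finset.mem_univ _)]
  · simp
  · intro a _ ha
    simp [Ne.symm ha]

lemma ent_comp_injective (p : Ω → ℝ) (f : Ω → γ) (g : γ → δ)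
    (hg : Function.Injective g) :
    ent p (fun ω => g (f ω)) = ent p f := by
  unfold ent
  have h0 : ∀ d ∈ Finset.univ, d ∉ Finset.image g Finset.univ →
      Real.negMulLog (distOf p (fun ω => g (f ω)) d) = 0 := by
    intro d _ hd
    have : distOf p (fun ω => g (f ω)) d = 0 := by
      apply Finset.sum_eq_zero
      intro ω _
      apply if_neg
      intro hcon
      exact hd (Finset.mem_image.2 ⟨f ω, Finset.mem_univ _, hcon⟩)
    simp [this]
  rw [← Finset.sum_subset (Finset.subset_univ (Finset.image g Finset.univ)) h0,
    Finset.sum_image (fun a _ b _ h => hg h)]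
  refine Finset.sum_congr rfl fun c _ => ?_
  congr 1
  unfold distOf
  exact Finset.sum_congr rfl fun ω _ => by simp [hg.eq_iff]

lemma ent_comp_eq_of_distOf_eq {Ω' : Type} [Fintype Ω'] {p : Ω → ℝ} {p' : Ω' → ℝ}
    {f : Ω → γ} {f' : Ω' → γ} (h : distOf p f = distOf p' f') (g : γ → δ) :
    ent p (fun ω => g (f ω)) = ent p' (fun ω => g (f' ω)) := by
  unfold ent
  refine Finset.sum_congr rfl fun c _ => ?_
  rw [distOf_comp p f g c, distOf_comp p' f' g c, h]

end Aux

section Mix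
variable {α β : Type} [Fintype α] [DecidableEq α] [Fintype β] [DecidableEq β]
variable {m₁ m₂ : ℕ}

lemma sum_fin_add {k₁ k₂ : ℕ} (F : Fin (k₁ + k₂) → ℝ) :
    ∑ z, F z = ∑ z : Fin k₁, F (Fin.castAdd k₂ z) + ∑ z : Fin k₂, F (Fin.natAdd k₁ z) := by
  rw [← Equiv.sum_comp finSumFinEquiv F, Fintype.sum_sum_type]
  simp [finSumFinEquiv_apply_left, finSumFinEquiv_apply_right]

lemma sum_prod3_split {k : ℕ} (F : α × β × Fin k → ℝ) :
    ∑ w, F w = ∑ x, ∑ y, ∑ z, F (x, y, z) := by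
  rw [Fintype.sum_prod_type]
  exact Finset.sum_congr rfl fun x _ => Fintype.sum_prod_type ..

noncomputable def mixQ (l μ : ℝ) (q₁ : α × β × Fin m₁ → ℝ) (q₂ : α × β × Fin m₂ → ℝ) :
    α × β × Fin (m₁ + m₂) → ℝ :=
  fun w => Sum.elim (fun z => l * q₁ (w.1, w.2.1, z)) (fun z => μ * q₂ (w.1, w.2.1, z))
    (finSumFinEquiv.symm w.2.2)

lemma mixQ_castAdd (l μ : ℝ) (q₁ : α × β × Fin m₁ → ℝ) (q₂ : α × β × Fin m₂ → ℝ)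
    (x : α) (y : β) (z : Fin m₁) :
    mixQ l μ q₁ q₂ (x, y, Fin.castAdd m₂ z) = l * q₁ (x, y, z) := by
  simp [mixQ, finSumFinEquiv_symm_apply_castAdd]

lemma mixQ_natAdd (l μ : ℝ) (q₁ : α × β × Fin m₁ → ℝ) (q₂ : α × β × Fin m₂ → ℝ)
    (x : α) (y : β) (z : Fin m₂) :
    mixQ l μ q₁ q₂ (x, y, Fin.natAdd m₁ z) = μ * q₂ (x, y, z) := by
  simp [mixQ, finSumFinEquiv_symm_apply_natAdd]

lemma distOf_mixQ {l μ : ℝ} {q₁ : α × β × Fin m₁ → ℝ} {q₂ : α × β × Fin m₂ → ℝ}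
    {γ : Type} [Fintype γ] [DecidableEq γ]
    (f : α × β × Fin (m₁ + m₂) → γ) (f₁ : α × β × Fin m₁ → γ) (f₂ : α × β × Fin m₂ → γ)
    (hf₁ : ∀ x y z, f (x, y, Fin.castAdd m₂ z) = f₁ (x, y, z))
    (hf₂ : ∀ x y z, f (x, y, Fin.natAdd m₁ z) = f₂ (x, y, z)) (c : γ) :
    distOf (mixQ l μ q₁ q₂) f c = l * distOf q₁ f₁ c + μ * distOf q₂ f₂ c := by
  unfold distOf
  rw [sum_prod3_split (fun w => if f w = c then mixQ l μ q₁ q₂ w else 0),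
    sum_prod3_split (fun w => if f₁ w = c then q₁ w else 0),
    sum_prod3_split (fun w => if f₂ w = c then q₂ w else 0)]
  simp only [Finset.mul_sum]
  rw [← Finset.sum_add_distrib]
  refine Finset.sum_congr rfl fun x _ => ?_
  rw [← Finset.sum_add_distrib]
  refine Finset.sum_congr rfl fun y _ => ?_
  rw [sum_fin_add (fun z => if f (x, y, z) = c then mixQ l μ q₁ q₂ (x, y, z) else 0)]
  congr 1 <;>
  · refine Finset.sum_congr rfl fun z _ => ?_
    simp [hf₁, hf₂, mixQ_castAdd, mixQ_natAdd, mul_ite]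

lemma isPmf_mixQ {l μ : ℝ} {q₁ : α × β × Fin m₁ → ℝ} {q₂ : α × β × Fin m₂ → ℝ}
    (hq₁ : IsPmf q₁) (hq₂ : IsPmf q₂) (hl : 0 ≤ l) (hμ : 0 ≤ μ) (hsum : l + μ = 1) :
    IsPmf (mixQ l μ q₁ q₂) := by
  constructor
  · intro w
    unfold mixQ
    rcases h : finSumFinEquiv.symm w.2.2 with z | z <;>
      simp [h, mul_nonneg, hl, hμ, hq₁.1 _, hq₂.1 _]
  · have h := distOf_mixQ (l := l) (μ := μ) (q₁ := q₁) (q₂ := q₂)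
      (fun _ => ()) (fun _ => ()) (fun _ => ()) (fun _ _ _ => rfl) (fun _ _ _ => rfl) ()
    unfold distOf at h
    simp only [eq_self_iff_true, if_true] at h
    rw [h, hq₁.2, hq₂.2, mul_one, mul_one, hsum]

end Mix

section KeyEnt
variable {α β : Type} [Fintype α] [DecidableEq α] [Fintype β] [DecidableEq β]
variable {m₁ m₂ : ℕ} {l μ : ℝ} {q₁ : α × β × Fin m₁ → ℝ} {q₂ : α × β × Fin m₂ → ℝ}

lemma inj_castPair {γ : Type} :
    Function.Injective (fun u : γ × Fin m₁ => (u.1, Fin.castAdd m₂ u.2)) := by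
  intro u v h
  rcases u with ⟨a, z⟩; rcases v with ⟨b, z'⟩
  simp only [Prod.mk.injEq, Fin.ext_iff, Fin.coe_castAdd] at h ⊢
  exact h

lemma inj_natPair {γ : Type} :
    Function.Injective (fun u : γ × Fin m₂ => (u.1, Fin.natAdd m₁ u.2)) := by
  intro u v h
  rcases u with ⟨a, z⟩; rcases v with ⟨b, z'⟩
  simp only [Prod.mk.injEq, Fin.ext_iff, Fin.coe_natAdd] at h ⊢
  exact ⟨h.1, by omega⟩
  
lemma ent_mixQ_z (hq₁ : IsPmf q₁) (hq₂ : IsPmf q₂)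
    {γ : Type} [Fintype γ] [DecidableEq γ] (g : α × β → γ) :
    ent (mixQ l μ q₁ q₂) (fun w => (g (w.1, w.2.1), w.2.2))
      = l * ent q₁ (fun w => (g (w.1, w.2.1), w.2.2))
        + μ * ent q₂ (fun w => (g (w.1, w.2.1), w.2.2))
        + (Real.negMulLog l + Real.negMulLog μ) := by
  classical
  set f₁ : α × β × Fin m₁ → γ × Fin (m₁ + m₂) :=
    fun w => (g (w.1, w.2.1), Fin.castAdd m₂ w.2.2) with hf₁def
  set f₂ : α × β × Fin m₂ → γ × Fin (m₁ + m₂) :=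
    fun w => (g (w.1, w.2.1), Fin.natAdd m₁ w.2.2) with hf₂def
  have hd : ∀ c, distOf (mixQ l μ q₁ q₂) (fun w => (g (w.1, w.2.1), w.2.2)) c
      = l * distOf q₁ f₁ c + μ * distOf q₂ f₂ c :=
    fun c => distOf_mixQ _ f₁ f₂ (fun x y z => rfl) (fun x y z => rfl) c
  have hdisj : ∀ c, distOf q₁ f₁ c = 0 ∨ distOf q₂ f₂ c = 0 := by
    intro c
    by_contra hcon
    push_neg at hcon
    obtain ⟨w₁, hw₁⟩ := exists_of_distOf_ne_zero hcon.1
    obtain ⟨w₂, hw₂⟩ := exists_of_distOf_ne_zero hcon.2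
    have h2 : (Fin.castAdd m₂ w₁.2.2 : Fin (m₁ + m₂)) = Fin.natAdd m₁ w₂.2.2 := by
      have := congrArg Prod.snd (hw₁.trans hw₂.symm)
      simpa [hf₁def, hf₂def] using this
    have hlt : (w₁.2.2 : ℕ) < m₁ := w₁.2.2.isLt
    rw [Fin.ext_iff] at h2
    simp only [Fin.coe_castAdd, Fin.coe_natAdd] at h2
    omega
  have hsplit : ∀ c : γ × Fin (m₁ + m₂),
      Real.negMulLog (l * distOf q₁ f₁ c + μ * distOf q₂ f₂ c)
        = (distOf q₁ f₁ c * Real.negMulLog l + l * Real.negMulLog (distOf q₁ f₁ c))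
          + (distOf q₂ f₂ c * Real.negMulLog μ + μ * Real.negMulLog (distOf q₂ f₂ c)) := by
    intro c
    rcases hdisj c with h | h <;> simp [h, Real.negMulLog_mul]
  have step : ent (mixQ l μ q₁ q₂) (fun w => (g (w.1, w.2.1), w.2.2))
      = (∑ c, distOf q₁ f₁ c) * Real.negMulLog l + l * ent q₁ f₁
        + ((∑ c, distOf q₂ f₂ c) * Real.negMulLog μ + μ * ent q₂ f₂) := by
    unfold ent
    rw [Finset.sum_congr rfl fun c _ => by rw [hd c, hsplit c]]
    rw [Finset.sum_add_distrib, Finset.sum_add_distrib, Finset.sum_add_distrib,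
      ← Finset.sum_mul, ← Finset.mul_sum, ← Finset.sum_mul, ← Finset.mul_sum]
  rw [step, distOf_sum_eq hq₁ f₁, distOf_sum_eq hq₂ f₂]
  have e₁ : ent q₁ f₁ = ent q₁ (fun w => (g (w.1, w.2.1), w.2.2)) :=
    ent_comp_injective q₁ (fun w => (g (w.1, w.2.1), w.2.2))
      (fun u : γ × Fin m₁ => (u.1, Fin.castAdd m₂ u.2)) inj_castPair
  have e₂ : ent q₂ f₂ = ent q₂ (fun w => (g (w.1, w.2.1), w.2.2)) :=
    ent_comp_injective q₂ (fun w => (g (w.1, w.2.1), w.2.2))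
      (fun u : γ × Fin m₂ => (u.1, Fin.natAdd m₁ u.2)) inj_natPair
  rw [e₁, e₂]
  ring

end KeyEnt

section NoZ
variable {α β : Type} [Fintype α] [DecidableEq α] [Fintype β] [DecidableEq β]
variable {m₁ m₂ : ℕ} {l μ : ℝ} {q₁ : α × β × Fin m₁ → ℝ} {q₂ : α × β × Fin m₂ → ℝ}

lemma distOf_mixQ_XY (hsum : l + μ = 1)
    (hE : distOf q₁ (fun w => (w.1, w.2.1)) = distOf q₂ (fun w => (w.1, w.2.1))) :
    distOf (mixQ l μ q₁ q₂) (fun w => (w.1, w.2.1))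
      = distOf q₁ (fun w => (w.1, w.2.1)) := by
  funext c
  rw [distOf_mixQ (fun w => (w.1, w.2.1)) (fun w => (w.1, w.2.1)) (fun w => (w.1, w.2.1))
    (fun x y z => rfl) (fun x y z => rfl) c, ← hE]
  linear_combination (distOf q₁ (fun w : α × β × Fin m₁ => (w.1, w.2.1)) c) * hsum

lemma ent_mixQ_noz (hsum : l + μ = 1)
    (hE : distOf q₁ (fun w => (w.1, w.2.1)) = distOf q₂ (fun w => (w.1, w.2.1)))
    {γ : Type} [Fintype γ] [DecidableEq γ] (g : α × β → γ) :
    ent (mixQ l μ q₁ q₂) (fun w => g (w.1, w.2.1))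
      = l * ent q₁ (fun w => g (w.1, w.2.1)) + μ * ent q₂ (fun w => g (w.1, w.2.1)) := by
  have e1 : ent (mixQ l μ q₁ q₂) (fun w => g (w.1, w.2.1))
      = ent q₁ (fun w => g (w.1, w.2.1)) :=
    ent_comp_eq_of_distOf_eq (distOf_mixQ_XY hsum hE) g
  have e2 : ent q₂ (fun w => g (w.1, w.2.1)) = ent q₁ (fun w => g (w.1, w.2.1)) :=
    ent_comp_eq_of_distOf_eq hE.symm g
  rw [e1, e2]
  linear_combination (- ent q₁ (fun w : α × β × Fin m₁ => g (w.1, w.2.1))) * hsum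

lemma ent_mixQ_zgen (hq₁ : IsPmf q₁) (hq₂ : IsPmf q₂)
    {γ δ δ₁ δ₂ : Type} [Fintype γ] [DecidableEq γ] [Fintype δ] [DecidableEq δ]
    [Fintype δ₁] [DecidableEq δ₁] [Fintype δ₂] [DecidableEq δ₂]
    (g : α × β → γ) (e : γ × Fin (m₁ + m₂) → δ) (e₁ : γ × Fin m₁ → δ₁)
    (e₂ : γ × Fin m₂ → δ₂) (he : Function.Injective e)
    (he₁ : Function.Injective e₁) (he₂ : Function.Injective e₂) :
    ent (mixQ l μ q₁ q₂) (fun w => e (g (w.1, w.2.1), w.2.2))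
      = l * ent q₁ (fun w => e₁ (g (w.1, w.2.1), w.2.2))
        + μ * ent q₂ (fun w => e₂ (g (w.1, w.2.1), w.2.2))
        + (Real.negMulLog l + Real.negMulLog μ) := by
  have a0 : ent (mixQ l μ q₁ q₂) (fun w : α × β × Fin (m₁ + m₂) => e (g (w.1, w.2.1), w.2.2))
      = ent (mixQ l μ q₁ q₂) (fun w => (g (w.1, w.2.1), w.2.2)) :=
    ent_comp_injective (mixQ l μ q₁ q₂) (fun w : α × β × Fin (m₁ + m₂) => (g (w.1, w.2.1), w.2.2)) e he
  have a1 : ent q₁ (fun w : α × β × Fin m₁ => e₁ (g (w.1, w.2.1), w.2.2))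
      = ent q₁ (fun w => (g (w.1, w.2.1), w.2.2)) :=
    ent_comp_injective q₁ (fun w : α × β × Fin m₁ => (g (w.1, w.2.1), w.2.2)) e₁ he₁
  have a2 : ent q₂ (fun w : α × β × Fin m₂ => e₂ (g (w.1, w.2.1), w.2.2))
      = ent q₂ (fun w => (g (w.1, w.2.1), w.2.2)) :=
    ent_comp_injective q₂ (fun w : α × β × Fin m₂ => (g (w.1, w.2.1), w.2.2)) e₂ he₂
  rw [a0, a1, a2, ent_mixQ_z hq₁ hq₂ g]

end NoZ

section Inj
variable {γ δ ε : Type}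

lemma inj3a : Function.Injective (fun u : (γ × δ) × ε => (u.1.1, u.2, u.1.2)) := by
  intro u v h
  rcases u with ⟨⟨a, b⟩, c⟩; rcases v with ⟨⟨a', b'⟩, c'⟩
  simp only [Prod.mk.injEq] at h ⊢
  tauto

lemma inj3b : Function.Injective (fun u : (γ × δ) × ε => (u.1.1, u.1.2, u.2)) := by
  intro u v h
  rcases u with ⟨⟨a, b⟩, c⟩; rcases v with ⟨⟨a', b'⟩, c'⟩
  simp only [Prod.mk.injEq] at h ⊢
  tauto

lemma injUnitSnd : Function.Injective (fun u : Unit × δ => u.2) := by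
  intro u v h
  rcases u with ⟨⟨⟩, z⟩; rcases v with ⟨⟨⟩, z'⟩
  simpa using h

end Inj

/-- The tension region `T(X;Y)` is a convex subset of `ℝ³`. -/
theorem stmt12 {Ω α β : Type} [Fintype Ω]
    [Fintype α] [DecidableEq α] [Fintype β] [DecidableEq β]
    (p : Ω → ℝ) (hp : IsPmf p) (X : Ω → α) (Y : Ω → β) :
    Convex ℝ (tension p X Y) := by
  rintro x ⟨m₁, q₁, hq₁, hm₁, rfl⟩ y ⟨m₂, q₂, hq₂, hm₂, rfl⟩ l μ hl hμ hsum
  have hE : distOf q₁ (fun w => (w.1, w.2.1)) = distOf q₂ (fun w => (w.1, w.2.1)) :=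
    hm₁.trans hm₂.symm
  refine ⟨m₁ + m₂, mixQ l μ q₁ q₂, isPmf_mixQ hq₁ hq₂ hl hμ hsum,
    (distOf_mixQ_XY hsum hE).trans hm₁, ?_⟩
  have nA : ent (mixQ l μ q₁ q₂) (fun w : α × β × Fin (m₁ + m₂) => (w.1, w.2.1))
      = l * ent q₁ (fun w : α × β × Fin m₁ => (w.1, w.2.1))
        + μ * ent q₂ (fun w : α × β × Fin m₂ => (w.1, w.2.1)) :=
    ent_mixQ_noz hsum hE (fun xy => xy)
  have nB : ent (mixQ l μ q₁ q₂) (fun w : α × β × Fin (m₁ + m₂) => (w.2.1, w.1))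
      = l * ent q₁ (fun w : α × β × Fin m₁ => (w.2.1, w.1))
        + μ * ent q₂ (fun w : α × β × Fin m₂ => (w.2.1, w.1)) :=
    ent_mixQ_noz hsum hE (fun xy => (xy.2, xy.1))
  have nC : ent (mixQ l μ q₁ q₂) (fun w : α × β × Fin (m₁ + m₂) => w.1)
      = l * ent q₁ (fun w : α × β × Fin m₁ => w.1)
        + μ * ent q₂ (fun w : α × β × Fin m₂ => w.1) :=
    ent_mixQ_noz hsum hE (fun xy => xy.1)
  have nD : ent (mixQ l μ q₁ q₂) (fun w : α × β × Fin (m₁ + m₂) => w.2.1)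
      = l * ent q₁ (fun w : α × β × Fin m₁ => w.2.1)
        + μ * ent q₂ (fun w : α × β × Fin m₂ => w.2.1) :=
    ent_mixQ_noz hsum hE (fun xy => xy.2)
  have zA : ent (mixQ l μ q₁ q₂) (fun w : α × β × Fin (m₁ + m₂) => (w.2.2, w.2.1))
      = l * ent q₁ (fun w : α × β × Fin m₁ => (w.2.2, w.2.1))
        + μ * ent q₂ (fun w : α × β × Fin m₂ => (w.2.2, w.2.1))
        + (Real.negMulLog l + Real.negMulLog μ) :=
    ent_mixQ_zgen hq₁ hq₂ (fun xy => xy.2) Prod.swap Prod.swap Prod.swap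
      Prod.swap_injective Prod.swap_injective Prod.swap_injective
  have zB : ent (mixQ l μ q₁ q₂) (fun w : α × β × Fin (m₁ + m₂) => (w.1, w.2.2, w.2.1))
      = l * ent q₁ (fun w : α × β × Fin m₁ => (w.1, w.2.2, w.2.1))
        + μ * ent q₂ (fun w : α × β × Fin m₂ => (w.1, w.2.2, w.2.1))
        + (Real.negMulLog l + Real.negMulLog μ) :=
    ent_mixQ_zgen hq₁ hq₂ (fun xy => xy) (fun u => (u.1.1, u.2, u.1.2))
      (fun u => (u.1.1, u.2, u.1.2)) (fun u => (u.1.1, u.2, u.1.2)) inj3a inj3a inj3a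
  have zC : ent (mixQ l μ q₁ q₂) (fun w : α × β × Fin (m₁ + m₂) => (w.2.2, w.1))
      = l * ent q₁ (fun w : α × β × Fin m₁ => (w.2.2, w.1))
        + μ * ent q₂ (fun w : α × β × Fin m₂ => (w.2.2, w.1))
        + (Real.negMulLog l + Real.negMulLog μ) :=
    ent_mixQ_zgen hq₁ hq₂ (fun xy => xy.1) Prod.swap Prod.swap Prod.swap
      Prod.swap_injective Prod.swap_injective Prod.swap_injective
  have zD : ent (mixQ l μ q₁ q₂) (fun w : α × β × Fin (m₁ + m₂) => (w.2.1, w.2.2, w.1))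
      = l * ent q₁ (fun w : α × β × Fin m₁ => (w.2.1, w.2.2, w.1))
        + μ * ent q₂ (fun w : α × β × Fin m₂ => (w.2.1, w.2.2, w.1))
        + (Real.negMulLog l + Real.negMulLog μ) :=
    ent_mixQ_zgen hq₁ hq₂ (fun xy => (xy.2, xy.1)) (fun u => (u.1.1, u.2, u.1.2))
      (fun u => (u.1.1, u.2, u.1.2)) (fun u => (u.1.1, u.2, u.1.2)) inj3a inj3a inj3a
  have zE : ent (mixQ l μ q₁ q₂) (fun w : α × β × Fin (m₁ + m₂) => (w.1, w.2.2))
      = l * ent q₁ (fun w : α × β × Fin m₁ => (w.1, w.2.2))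
        + μ * ent q₂ (fun w : α × β × Fin m₂ => (w.1, w.2.2))
        + (Real.negMulLog l + Real.negMulLog μ) :=
    ent_mixQ_zgen hq₁ hq₂ (fun xy => xy.1) id id id
      Function.injective_id Function.injective_id Function.injective_id
  have zF : ent (mixQ l μ q₁ q₂) (fun w : α × β × Fin (m₁ + m₂) => (w.2.1, w.2.2))
      = l * ent q₁ (fun w : α × β × Fin m₁ => (w.2.1, w.2.2))
        + μ * ent q₂ (fun w : α × β × Fin m₂ => (w.2.1, w.2.2))
        + (Real.negMulLog l + Real.negMulLog μ) :=
    ent_mixQ_zgen hq₁ hq₂ (fun xy => xy.2) id id id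
      Function.injective_id Function.injective_id Function.injective_id
  have zG : ent (mixQ l μ q₁ q₂) (fun w : α × β × Fin (m₁ + m₂) => (w.1, w.2.1, w.2.2))
      = l * ent q₁ (fun w : α × β × Fin m₁ => (w.1, w.2.1, w.2.2))
        + μ * ent q₂ (fun w : α × β × Fin m₂ => (w.1, w.2.1, w.2.2))
        + (Real.negMulLog l + Real.negMulLog μ) :=
    ent_mixQ_zgen hq₁ hq₂ (fun xy => xy) (fun u => (u.1.1, u.1.2, u.2))
      (fun u => (u.1.1, u.1.2, u.2)) (fun u => (u.1.1, u.1.2, u.2)) inj3b inj3b inj3b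
  have zH : ent (mixQ l μ q₁ q₂) (fun w : α × β × Fin (m₁ + m₂) => w.2.2)
      = l * ent q₁ (fun w : α × β × Fin m₁ => w.2.2)
        + μ * ent q₂ (fun w : α × β × Fin m₂ => w.2.2)
        + (Real.negMulLog l + Real.negMulLog μ) :=
    ent_mixQ_zgen hq₁ hq₂ (fun _ => ()) (fun u => u.2) (fun u => u.2) (fun u => u.2)
      injUnitSnd injUnitSnd injUnitSnd
  simp only [Prod.smul_mk, smul_eq_mul, Prod.mk_add_mk, Prod.mk.injEq]
  refine ⟨?_, ?_, ?_⟩ <;>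
  · simp only [cmi, nA, nB, nC, nD, zA, zB, zC, zD, zE, zF, zG, zH]
    ring
end
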